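/- Let f: ℝ^d → ℝ be L-smooth, α > 0, γ > 0, and let x ∈ ℝ^d and g̃ ∈ ℝ^d with ‖g̃‖ ≤ γ. Write g̃ - ∇f(x) = u + b for vectors u, b ∈ ℝ^d with ‖b‖ ≤ 4σ^p γ^{1-p}. Then for x⁺ = x - αg̃: f(x⁺) ≤ f(x) - (α/2)‖∇f(x)‖² - α⟨∇f(x), u⟩ + 8ασ^{2p}γ^{2(1-p)} + (α²γ²L)/2. -/

import Mathlib

theorem clipped_sgd_descent_inequality
    {d : ℕ} (f : EuclideanSpace ℝ (Fin d) → ℝ)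
    (f' : EuclideanSpace ℝ (Fin d) → EuclideanSpace ℝ (Fin d))
    (hf : ∀ y, HasGradientAt f (f' y) y)
    (L : ℝ) (hL : 0 < L)
    (hsmooth : ∀ y y', f y' ≤ f y + (inner ℝ (f' y) (y' - y) : ℝ) + L / 2 * ‖y' - y‖ ^ 2)
    (α γ σ p : ℝ) (hα : 0 < α) (hγ : 0 < γ) (hσ : 0 < σ) (hp : 1 < p) (hp2 : p ≤ 2)
    (x gc u b : EuclideanSpace ℝ (Fin d))
    (hg : ‖gc‖ ≤ γ)
    (hdecomp : gc - f' x = u + b)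
    (hb : ‖b‖ ≤ 4 * σ ^ p * γ ^ (1 - p)) :
    f (x - α • gc) ≤
      f x - α / 2 * ‖f' x‖ ^ 2 - α * (inner ℝ (f' x) u : ℝ)
        + 8 * α * σ ^ (2 * p) * γ ^ (2 * (1 - p)) + α ^ 2 * γ ^ 2 * L / 2 := by
  have h1 := hsmooth x (x - α • gc)
  have hxy : x - α • gc - x = -(α • gc) := by abel
  rw [hxy] at h1
  have hnorm : ‖-(α • gc)‖ ^ 2 = α ^ 2 * ‖gc‖ ^ 2 := by
    rw [norm_neg, norm_smul, mul_pow, Real.norm_eq_abs, sq_abs]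
  have hinner : (inner ℝ (f' x) (-(α • gc)) : ℝ) = -(α * inner ℝ (f' x) gc) := by
    rw [inner_neg_right, real_inner_smul_right]
  have hgc : gc = f' x + (u + b) := by
    rw [sub_eq_iff_eq_add] at hdecomp; rw [hdecomp]; abel
  have hic : (inner ℝ (f' x) gc : ℝ) = ‖f' x‖ ^ 2 + inner ℝ (f' x) u + inner ℝ (f' x) b := by
    rw [hgc, inner_add_right, inner_add_right, real_inner_self_eq_norm_sq]; ring
  have hcs : -(inner ℝ (f' x) b : ℝ) ≤ ‖f' x‖ ^ 2 / 2 + ‖b‖ ^ 2 / 2 := by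
    have h := abs_real_inner_le_norm (f' x) b
    nlinarith [neg_abs_le (inner ℝ (f' x) b : ℝ), sq_nonneg (‖f' x‖ - ‖b‖)]
  have hb2 : ‖b‖ ^ 2 ≤ 16 * σ ^ (2 * p) * γ ^ (2 * (1 - p)) := by
    have h16 : (4 * σ ^ p * γ ^ (1 - p)) ^ 2 = 16 * σ ^ (2 * p) * γ ^ (2 * (1 - p)) := by
      rw [mul_pow, mul_pow, ← Real.rpow_natCast (σ ^ p) 2, ← Real.rpow_natCast (γ ^ (1 - p)) 2,
        ← Real.rpow_mul hσ.le, ← Real.rpow_mul hγ.le]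
      norm_num [mul_comm]
    nlinarith [norm_nonneg b, Real.rpow_nonneg hσ.le p, Real.rpow_nonneg hγ.le (1 - p)]
  have hg2 : ‖gc‖ ^ 2 ≤ γ ^ 2 := by nlinarith [norm_nonneg gc]
  rw [hnorm, hinner, hic] at h1
  have c1 := mul_le_mul_of_nonneg_left hcs hα.le
  have c2 := mul_le_mul_of_nonneg_left hb2 hα.le
  have c3 := mul_le_mul_of_nonneg_left hg2 (by positivity : (0:ℝ) ≤ L / 2 * α ^ 2)
  linarith [c1, c2, c3, h1]
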